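/- Let $x$ and $k$ be positive integers. Then: (a) if $k = 1$, then $v_3(S_k(x)) = v_3(x(x+1))$; (b) if $k$ is even, then $v_3(S_k(x)) = v_3(x(x+1)(2x+1)) - 1$; (c) if $x \equiv 1 \pmod{3}$ and $k \ge 3$ is odd, then $v_3(S_k(x)) = 0$; (d) if $x \equiv 0$ or $2 \pmod{3}$ and $k \ge 3$ is odd, then $v_3(S_k(x)) = v_3(k x^2 (x+1)^2) - 1$. -/

import Mathlib

open Finset

/-- `S k x = 1^k + 2^k + ... + x^k`. -/
def S (k x : ℕ) : ℕ := ∑ i ∈ Finset.Icc 1 x, i ^ k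
lemma S_eq_Ioc (k x : ℕ) : S k x = ∑ i ∈ Ioc 0 x, i ^ k := by
  rw [S, ← Finset.Icc_add_one_left_eq_Ioc, zero_add]

lemma modeq_sum {ι : Type*} {s : Finset ι} {f g : ι → ℕ} {n : ℕ}
    (h : ∀ i ∈ s, f i ≡ g i [MOD n]) : ∑ i ∈ s, f i ≡ ∑ i ∈ s, g i [MOD n] := by
  induction s using Finset.cons_induction with
  | empty => rfl
  | cons a s ha ih =>
    rw [Finset.sum_cons, Finset.sum_cons]
    exact (h a (by simp)).add (ih (fun i hi => h i (by simp [hi])))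

lemma S_succ' (k x : ℕ) : S k (x+1) = S k x + (x+1)^k := by
  rw [S, S, Finset.sum_Icc_succ_top (by omega)]

lemma S_add (k a b : ℕ) : S k (a + b) = S k a + ∑ r ∈ Ioc 0 b, (a + r)^k := by
  rw [S_eq_Ioc, S_eq_Ioc, ← Finset.sum_Ioc_consecutive _ (Nat.zero_le a) (Nat.le_add_right a b)]
  congr 1
  rw [show Ioc a (a+b) = Finset.map (addLeftEmbedding a) (Ioc 0 b) by
    rw [Finset.map_add_left_Ioc]; simp]
  rw [Finset.sum_map]
  rfl

lemma block (k m y : ℕ) (hm : 0 < m) :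
    S k (3^m * y) ≡ y * S k (3^m) [MOD 3^m] := by
  induction y with
  | zero => simp [S]; rfl
  | succ n ih =>
    have : 3^m * (n+1) = 3^m * n + 3^m := by ring
    rw [this, S_add]
    have h2 : ∑ r ∈ Ioc 0 (3^m), (3^m * n + r)^k ≡ ∑ r ∈ Ioc 0 (3^m), r^k [MOD 3^m] := by
      refine modeq_sum (fun r _ => Nat.ModEq.pow k ?_)
      simpa using ((Nat.modEq_zero_iff_dvd.2 ⟨n, rfl⟩).add_right r)
    calc S k (3^m * n) + ∑ r ∈ Ioc 0 (3^m), (3^m * n + r)^k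
        ≡ n * S k (3^m) + ∑ r ∈ Ioc 0 (3^m), r^k [MOD 3^m] := ih.add h2
      _ = (n+1) * S k (3^m) := by rw [← S_eq_Ioc]; ring

lemma int_modEq_of_dvd {a b n : ℤ} (h : n ∣ a - b) : a ≡ b [ZMOD n] :=
  Int.ModEq.symm (Int.modEq_iff_dvd.2 h)

lemma pow_modEq (a b : ℤ) (k : ℕ) :
    (a + b)^(k+1) ≡ a^(k+1) + (k+1) * a^k * b [ZMOD b^2] := by
  induction k with
  | zero => simp
  | succ n ih =>
    have h1 : (a+b)^(n+1+1) = (a+b)^(n+1) * (a+b) := by ring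
    rw [h1]
    have h2 : (a+b)^(n+1) * (a+b) ≡ (a^(n+1) + (n+1)*a^n*b) * (a+b) [ZMOD b^2] :=
      ih.mul_right _
    refine h2.trans (int_modEq_of_dvd ?_)
    have e2 : (a ^ (n + 1) + (↑n + 1) * a ^ n * b) * (a + b) - (a ^ (n + 1 + 1) + (↑(n + 1) + 1) * a ^ (n + 1) * b) = ((n+1)*a^n) * b^2 := by push_cast; ring
    rw [e2]; exact ⟨(n+1)*a^n, by ring⟩

lemma Tstep (j m : ℕ) (hm : 0 < m) :
    S (j+1) (3^(m+1)) ≡ 3 * S (j+1) (3^m) [MOD 3^(m+1)] := by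
  set k := j + 1 with hkdef
  set n := 3^m with hndef
  set W := ∑ r ∈ Ioc 0 n, r^j with hWdef
  have point : ∀ s r : ℕ, (s*n + r)^k ≡ r^k + k * r^j * (s*n) [MOD 3^(m+1)] := by
    intro s r
    rw [← Int.natCast_modEq_iff]
    push_cast
    have h1 := pow_modEq (r : ℤ) ((s*n : ℕ) : ℤ) j
    rw [add_comm ((r:ℤ)) _] at h1
    have hdvd : ((3:ℤ)^(m+1)) ∣ ((s*n : ℕ) : ℤ)^2 := by
      have : ((s*n : ℕ) : ℤ)^2 = (s:ℤ)^2 * 3^(2*m) := by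
        push_cast [hndef]; ring
      rw [this]
      exact Dvd.dvd.mul_left (pow_dvd_pow 3 (by omega)) _
    have := h1.of_dvd hdvd
    push_cast at this ⊢
    convert this using 2 <;> push_cast [hkdef] <;> ring
  have bsum : ∀ s : ℕ, ∑ r ∈ Ioc 0 n, (s*n + r)^k
      ≡ S k n + k * s * n * W [MOD 3^(m+1)] := by
    intro s
    have h1 : ∑ r ∈ Ioc 0 n, (s*n + r)^k ≡ ∑ r ∈ Ioc 0 n, (r^k + k * r^j * (s*n)) [MOD 3^(m+1)] :=
      modeq_sum (fun r _ => point s r)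
    have h2 : ∑ r ∈ Ioc 0 n, (r^k + k * r^j * (s*n)) = S k n + k * s * n * W := by
      rw [Finset.sum_add_distrib, ← S_eq_Ioc, hWdef, Finset.mul_sum]
      congr 1
      apply Finset.sum_congr rfl
      intro r _
      ring
    rw [h2] at h1; exact h1
  have e : S k (3^(m+1)) = S k (n + n + n) := by congr 1; rw [pow_succ]; ring
  rw [e, S_add, S_add]
  have h1 : ∑ r ∈ Ioc 0 n, (n + r)^k ≡ S k n + k * 1 * n * W [MOD 3^(m+1)] := by
    have := bsum 1; rwa [one_mul] at this
  have h2 : ∑ r ∈ Ioc 0 n, (n + n + r)^k ≡ S k n + k * 2 * n * W [MOD 3^(m+1)] := by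
    have := bsum 2; rwa [two_mul] at this
  calc S k n + ∑ r ∈ Ioc 0 n, (n + r)^k + ∑ r ∈ Ioc 0 n, (n + n + r)^k
      ≡ S k n + (S k n + k * 1 * n * W) + (S k n + k * 2 * n * W) [MOD 3^(m+1)] :=
        ((Nat.ModEq.refl _).add h1).add h2
    _ = 3 * S k n + 3^(m+1) * (k * W) := by rw [pow_succ]; ring
    _ ≡ 3 * S k n + 0 [MOD 3^(m+1)] :=
        (Nat.ModEq.refl _).add (Nat.modEq_zero_iff_dvd.2 ⟨k*W, rfl⟩)
    _ = 3 * S k n := by ring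

lemma T_even (k m : ℕ) (hk : 0 < k) (he : Even k) (hm : 0 < m) :
    S k (3^m) ≡ 2 * 3^(m-1) [MOD 3^m] := by
  induction m with
  | zero => omega
  | succ m ih =>
    rcases Nat.eq_zero_or_pos m with rfl | hm'
    · -- base : S k 3 ≡ 2 [MOD 3]
      norm_num
      have e : S k 3 = 1 + 2^k + 3^k := by
        rw [S, show Finset.Icc 1 3 = {1,2,3} from rfl]
        rw [Finset.sum_insert (by decide), Finset.sum_insert (by decide), Finset.sum_singleton, one_pow]
        omega
      rw [e]
      obtain ⟨t, rfl⟩ := he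
      have h2 : 2^(t+t) ≡ 1 [MOD 3] := by
        have : (2:ℕ)^(t+t) = 4^t := by rw [← two_mul, pow_mul]; norm_num
        rw [this]
        calc (4:ℕ)^t ≡ 1^t [MOD 3] := Nat.ModEq.pow t (by decide)
          _ = 1 := one_pow t
      have h3 : 3^(t+t) ≡ 0 [MOD 3] := Nat.modEq_zero_iff_dvd.2 (dvd_pow_self 3 (by omega))
      calc 1 + 2^(t+t) + 3^(t+t) ≡ 1 + 1 + 0 [MOD 3] :=
            ((Nat.ModEq.refl 1).add h2).add h3
        _ = 2 := rfl
    · obtain ⟨j, rfl⟩ : ∃ j, k = j + 1 := ⟨k - 1, by omega⟩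
      have step := Tstep j m hm'
      have ih' := ih hm'
      have h3 : 3 * S (j+1) (3^m) ≡ 3 * (2 * 3^(m-1)) [MOD 3 * 3^m] :=
        ih'.mul_left' 3
      have e1 : 3 * (2 * 3^(m-1)) = 2 * 3^m := by
        rw [show (3:ℕ)^m = 3 * 3^(m-1) from by
          conv_lhs => rw [show m = 1 + (m-1) by omega, pow_add, pow_one]]
        ring
      have e2 : 3 * 3^m = 3^(m+1) := by rw [pow_succ]; ring
      rw [e1, e2] at h3
      simpa using step.trans h3

lemma S_range (k x : ℕ) (hk : 0 < k) : S k x = ∑ i ∈ range (x+1), i ^ k := by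
  induction x with
  | zero => simp [S]; exact (zero_pow hk.ne').symm
  | succ n ih => rw [S_succ', Finset.sum_range_succ, ih]

lemma extract {v u n : ℕ} (hn : 0 < n) (hu : ¬ 3 ∣ u)
    (h : n ≡ 3^v * u [MOD 3^(v+1)]) : padicValNat 3 n = v := by
  haveI : Fact (Nat.Prime 3) := ⟨by norm_num⟩
  have hdvd : (3:ℕ)^v ∣ n := by
    have h1 : ((3:ℕ)^(v+1) : ℤ) ∣ ((3^v * u : ℕ):ℤ) - (n:ℤ) := by
      exact_mod_cast h.dvd
    have h2 : ((3:ℕ)^v : ℤ) ∣ (n:ℤ) := by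
      have hd : ((3:ℕ)^v : ℤ) ∣ ((3:ℕ)^(v+1) : ℤ) := by
        exact_mod_cast pow_dvd_pow (3:ℤ) (by omega)
      have h4 : ((3:ℕ)^v : ℤ) ∣ ((3^v * u : ℕ) : ℤ) := by push_cast; exact Dvd.intro _ rfl
      simpa using h4.sub (hd.trans h1)
    exact_mod_cast h2
  have hndvd : ¬ (3:ℕ)^(v+1) ∣ n := by
    intro hc
    have h5 : (3:ℕ)^(v+1) ∣ 3^v * u :=
      Nat.modEq_zero_iff_dvd.1 (h.symm.trans (Nat.modEq_zero_iff_dvd.2 hc))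
    rw [pow_succ] at h5
    have := (Nat.mul_dvd_mul_iff_left (pow_pos (by norm_num : (0:ℕ)<3) v)).1 h5
    exact hu this
  have h1 : v ≤ padicValNat 3 n := (padicValNat_dvd_iff_le hn.ne').1 hdvd
  have h2 : padicValNat 3 n < v + 1 := by
    by_contra hc
    exact hndvd ((padicValNat_dvd_iff_le hn.ne').2 (by omega))
  omega

/-- key congruence for the block at full scale -/
lemma S_block_val (k v y : ℕ) (hk : 0 < k) (he : Even k) (hv : 0 < v) :
    S k (3^v * y) ≡ 3^(v-1) * (2*y) [MOD 3^v] := by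
  have h1 := block k v y hv
  have h2 := T_even k v hk he hv
  have h3 : y * S k (3^v) ≡ y * (2 * 3^(v-1)) [MOD 3^v] := h2.mul_left y
  refine (h1.trans h3).trans ?_
  rw [show y * (2 * 3^(v-1)) = 3^(v-1) * (2*y) from by ring]

lemma neg_pow_modEq (M N r k : ℕ) (he : Even k) (h3 : M ∣ N) (hr : r ≤ N) :
    (N - r)^k ≡ r^k [MOD M] := by
  rw [← Int.natCast_modEq_iff]
  push_cast [hr]
  calc ((N:ℤ) - r)^k ≡ (0 - r)^k [ZMOD (M:ℤ)] := by
        refine Int.ModEq.pow k (int_modEq_of_dvd ?_)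
        simpa using Int.natCast_dvd_natCast.2 h3
    _ = (r:ℤ)^k := by rw [zero_sub, he.neg_pow]

lemma S_double (k x M : ℕ) (he : Even k) (hd : M ∣ 2*x+1) :
    S k (2*x) ≡ 2 * S k x [MOD M] := by
  have e1 : S k (2*x) = S k x + ∑ r ∈ Ioc 0 x, (x + r)^k := by
    rw [two_mul, S_add]
  have e2 : ∑ r ∈ Ioc 0 x, (x + r)^k = ∑ r ∈ Ioc 0 x, ((2*x+1) - r)^k := by
    apply Finset.sum_nbij' (i := fun r => x + 1 - r) (j := fun r => x + 1 - r)
    · intro a ha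
      simp only [Finset.mem_Ioc] at ha ⊢
      omega
    · intro a ha
      simp only [Finset.mem_Ioc] at ha ⊢
      omega
    · intro a ha
      simp only [Finset.mem_Ioc] at ha
      omega
    · intro a ha
      simp only [Finset.mem_Ioc] at ha
      omega
    · intro a ha
      simp only [Finset.mem_Ioc] at ha
      congr 1
      omega
  have e3 : ∑ r ∈ Ioc 0 x, ((2*x+1) - r)^k ≡ ∑ r ∈ Ioc 0 x, r^k [MOD M] := by
    refine modeq_sum (fun r hr => ?_)
    simp only [Finset.mem_Ioc] at hr
    exact neg_pow_modEq M (2*x+1) r k he hd (by omega)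
  rw [e1, e2]
  calc S k x + ∑ r ∈ Ioc 0 x, ((2*x+1) - r)^k ≡ S k x + ∑ r ∈ Ioc 0 x, r^k [MOD M] :=
        (Nat.ModEq.refl _).add e3
    _ = 2 * S k x := by rw [← S_eq_Ioc]; ring

lemma S_pos (k x : ℕ) (hx : 0 < x) : 0 < S k x := by
  rw [S]
  have h1 : (1:ℕ) ∈ Finset.Icc 1 x := by simp; omega
  calc (0:ℕ) < 1^k := by simp
    _ ≤ _ := Finset.single_le_sum (f := fun i => i^k) (fun i _ => Nat.zero_le _) h1

lemma S_succ (k x : ℕ) : S k (x+1) = S k x + (x+1)^k := by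
  rw [S, S, Finset.sum_Icc_succ_top (by omega)]

lemma evenCase (x k : ℕ) (hx : 0 < x) (hk : 0 < k) (he : Even k) :
    padicValNat 3 (S k x) = padicValNat 3 (x * (x + 1) * (2 * x + 1)) - 1 := by
  haveI : Fact (Nat.Prime 3) := ⟨by norm_num⟩
  have hx1 : x + 1 ≠ 0 := by omega
  have h2x1 : 2*x+1 ≠ 0 := by omega
  rcases (show x % 3 = 0 ∨ x % 3 = 1 ∨ x % 3 = 2 by omega) with h3 | h3 | h3
  · -- x ≡ 0 : v = v3(x)
    have hdvd : 3 ∣ x := by omega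
    set v := padicValNat 3 x with hv
    have hv1 : 1 ≤ v := one_le_padicValNat_of_dvd hx.ne' hdvd
    set y := x / 3^v with hy
    have hxy : x = 3^v * y := (Nat.ordProj_mul_ordCompl_eq_self x 3).symm
    have hy3 : ¬ 3 ∣ y := Nat.not_dvd_ordCompl (by norm_num) hx.ne'
    have hcong : S k x ≡ 3^(v-1) * (2*y) [MOD 3^v] := by
      rw [hxy]; exact S_block_val k v y hk he hv1
    have hval : padicValNat 3 (S k x) = v - 1 := by
      refine extract (u := 2*y) (S_pos k x hx) (by omega) ?_
      rwa [show v - 1 + 1 = v by omega]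
    have hrhs : padicValNat 3 (x * (x+1) * (2*x+1)) = v := by
      rw [padicValNat.mul (by positivity) h2x1, padicValNat.mul hx.ne' hx1,
        padicValNat.eq_zero_of_not_dvd (show ¬ 3 ∣ x+1 by omega),
        padicValNat.eq_zero_of_not_dvd (show ¬ 3 ∣ 2*x+1 by omega)]
      omega
    omega
  · -- x ≡ 1 : v = v3(2x+1)
    have hdvd : 3 ∣ 2*x+1 := by omega
    set v := padicValNat 3 (2*x+1) with hv
    have hv1 : 1 ≤ v := one_le_padicValNat_of_dvd (by omega) hdvd
    set y := (2*x+1) / 3^v with hy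
    have hxy : 2*x+1 = 3^v * y := (Nat.ordProj_mul_ordCompl_eq_self (2*x+1) 3).symm
    have hy3 : ¬ 3 ∣ y := Nat.not_dvd_ordCompl (by norm_num) h2x1
    have hps : 3^v ∣ 2*x+1 := pow_padicValNat_dvd
    have h1 : S k (2*x+1) ≡ 3^(v-1) * (2*y) [MOD 3^v] := by
      rw [hxy]; exact S_block_val k v y hk he hv1
    have h0 : (2*x+1)^k ≡ 0 [MOD 3^v] :=
      Nat.modEq_zero_iff_dvd.2 (hps.trans (dvd_pow_self _ hk.ne'))
    have h2 : S k (2*x) ≡ 3^(v-1) * (2*y) [MOD 3^v] := by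
      have e := S_succ k (2*x)
      have h3' : S k (2*x) + (2*x+1)^k ≡ S k (2*x) + 0 [MOD 3^v] :=
        (Nat.ModEq.refl _).add h0
      calc S k (2*x) = S k (2*x) + 0 := by ring
        _ ≡ S k (2*x) + (2*x+1)^k [MOD 3^v] := h3'.symm
        _ = S k (2*x+1) := e.symm
        _ ≡ 3^(v-1) * (2*y) [MOD 3^v] := h1
    have h4 : 2 * S k x ≡ 3^(v-1) * (2*y) [MOD 3^v] :=
      ((S_double k x (3^v) he hps).symm).trans h2
    have hval2 : padicValNat 3 (2 * S k x) = v - 1 := by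
      refine extract (u := 2*y) (by have := S_pos k x hx; omega) (by omega) ?_
      rwa [show v - 1 + 1 = v by omega]
    have hval : padicValNat 3 (S k x) = v - 1 := by
      rw [padicValNat.mul (by norm_num) (S_pos k x hx).ne',
        padicValNat.eq_zero_of_not_dvd (by norm_num)] at hval2
      simpa using hval2
    have hrhs : padicValNat 3 (x * (x+1) * (2*x+1)) = v := by
      rw [padicValNat.mul (by positivity) h2x1, padicValNat.mul hx.ne' hx1,
        padicValNat.eq_zero_of_not_dvd (show ¬ 3 ∣ x by omega),
        padicValNat.eq_zero_of_not_dvd (show ¬ 3 ∣ x+1 by omega)]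
      omega
    omega
  · -- x ≡ 2 : v = v3(x+1)
    have hdvd : 3 ∣ x+1 := by omega
    set v := padicValNat 3 (x+1) with hv
    have hv1 : 1 ≤ v := one_le_padicValNat_of_dvd (by omega) hdvd
    set y := (x+1) / 3^v with hy
    have hxy : x+1 = 3^v * y := (Nat.ordProj_mul_ordCompl_eq_self (x+1) 3).symm
    have hy3 : ¬ 3 ∣ y := Nat.not_dvd_ordCompl (by norm_num) hx1
    have hps : 3^v ∣ x+1 := pow_padicValNat_dvd
    have h1 : S k (x+1) ≡ 3^(v-1) * (2*y) [MOD 3^v] := by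
      rw [hxy]; exact S_block_val k v y hk he hv1
    have h0 : (x+1)^k ≡ 0 [MOD 3^v] :=
      Nat.modEq_zero_iff_dvd.2 (hps.trans (dvd_pow_self _ hk.ne'))
    have hcong : S k x ≡ 3^(v-1) * (2*y) [MOD 3^v] := by
      calc S k x = S k x + 0 := by ring
        _ ≡ S k x + (x+1)^k [MOD 3^v] := (Nat.ModEq.refl _).add h0.symm
        _ = S k (x+1) := (S_succ k x).symm
        _ ≡ 3^(v-1) * (2*y) [MOD 3^v] := h1
    have hval : padicValNat 3 (S k x) = v - 1 := by
      refine extract (u := 2*y) (S_pos k x hx) (by omega) ?_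
      rwa [show v - 1 + 1 = v by omega]
    have hrhs : padicValNat 3 (x * (x+1) * (2*x+1)) = v := by
      rw [padicValNat.mul (by positivity) h2x1, padicValNat.mul hx.ne' hx1,
        padicValNat.eq_zero_of_not_dvd (show ¬ 3 ∣ x by omega),
        padicValNat.eq_zero_of_not_dvd (show ¬ 3 ∣ 2*x+1 by omega)]
      omega
    omega

lemma S_one (x : ℕ) : S 1 x * 2 = x * (x + 1) := by
  induction x with
  | zero => simp [S]
  | succ n ih => rw [S_succ, pow_one, Nat.add_mul, ih]; ring

lemma caseA (x : ℕ) (hx : 0 < x) :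
    padicValNat 3 (S 1 x) = padicValNat 3 (x * (x + 1)) := by
  haveI : Fact (Nat.Prime 3) := ⟨by norm_num⟩
  have h1 : padicValNat 3 (S 1 x * 2) = padicValNat 3 (S 1 x) := by
    rw [padicValNat.mul (S_pos 1 x hx).ne' (by norm_num),
      show padicValNat 3 2 = 0 from padicValNat.eq_zero_of_not_dvd (by norm_num)]
    omega
  rw [← h1, S_one]

lemma pow_mod3 (i k : ℕ) (hko : Odd k) : i^k ≡ i [MOD 3] := by
  obtain ⟨t, rfl⟩ := hko
  rcases (show i % 3 = 0 ∨ i % 3 = 1 ∨ i % 3 = 2 by omega) with h | h | h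
  · have h0 : i ≡ 0 [MOD 3] := h
    calc i^(2*t+1) ≡ 0^(2*t+1) [MOD 3] := h0.pow _
      _ = 0 := by simp
      _ ≡ i [MOD 3] := h0.symm
  · have h0 : i ≡ 1 [MOD 3] := h
    calc i^(2*t+1) ≡ 1^(2*t+1) [MOD 3] := h0.pow _
      _ = 1 := one_pow _
      _ ≡ i [MOD 3] := h0.symm
  · have h0 : i ≡ 2 [MOD 3] := h
    calc i^(2*t+1) ≡ 2^(2*t+1) [MOD 3] := h0.pow _
      _ = 4^t * 2 := by rw [pow_succ, pow_mul]; norm_num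
      _ ≡ 1^t * 2 [MOD 3] := (Nat.ModEq.pow t (by decide)).mul_right 2
      _ = 2 := by ring
      _ ≡ i [MOD 3] := h0.symm

lemma S_odd_mod3 (k x : ℕ) (hko : Odd k) : S k x ≡ S 1 x [MOD 3] := by
  rw [S, S]
  refine modeq_sum (fun i _ => ?_)
  calc i^k ≡ i [MOD 3] := pow_mod3 i k hko
    _ = i^1 := (pow_one i).symm

lemma caseC (x k : ℕ) (hx : 0 < x) (h3 : x % 3 = 1) (hko : Odd k) :
    padicValNat 3 (S k x) = 0 := by
  apply padicValNat.eq_zero_of_not_dvd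
  have h1 := S_odd_mod3 k x hko
  have h2 := S_one x
  have hx2 : (x*(x+1)) % 3 = 2 := by
    rw [Nat.mul_mod, h3, show (x+1)%3 = 2 by omega]
  have h3' : S 1 x % 3 = 1 := by omega
  have : S k x % 3 = 1 := by
    have := h1
    unfold Nat.ModEq at this
    omega
  omega

lemma three_pow_ge (t : ℕ) (ht : 1 ≤ t) : t + 2 ≤ 3^t := by
  induction t with
  | zero => omega
  | succ n ih =>
    rcases Nat.eq_zero_or_pos n with rfl | hn
    · norm_num
    · have := ih hn
      have : 3^(n+1) = 3 * 3^n := by rw [pow_succ]; ring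
      omega

lemma val3_le (j : ℕ) (hj : 2 ≤ j) : padicValNat 3 j ≤ j - 2 := by
  haveI : Fact (Nat.Prime 3) := ⟨by norm_num⟩
  set t := padicValNat 3 j with htdef
  have h1 : 3^t ∣ j := pow_padicValNat_dvd
  have h2 : 3^t ≤ j := Nat.le_of_dvd (by omega) h1
  rcases Nat.eq_zero_or_pos t with h | h
  · omega
  · have h3 := three_pow_ge t h
    omega

lemma choose_val (k j : ℕ) (hj1 : 1 ≤ j) (hjk : j ≤ k) :
    3^(padicValNat 3 k - padicValNat 3 j) ∣ Nat.choose k j := by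
  haveI : Fact (Nat.Prime 3) := ⟨by norm_num⟩
  have hk0 : 0 < k := by omega
  have hC : Nat.choose k j ≠ 0 := (Nat.choose_pos hjk).ne'
  have hC' : Nat.choose (k-1) (j-1) ≠ 0 := (Nat.choose_pos (by omega)).ne'
  have hid : k * Nat.choose (k-1) (j-1) = Nat.choose k j * j := by
    have := Nat.add_one_mul_choose_eq (k-1) (j-1)
    rwa [show k - 1 + 1 = k by omega,
      show j - 1 + 1 = j by omega] at this
  have hval : padicValNat 3 k + padicValNat 3 (Nat.choose (k-1) (j-1))
      = padicValNat 3 (Nat.choose k j) + padicValNat 3 j := by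
    rw [← padicValNat.mul hk0.ne' hC', ← padicValNat.mul hC (by omega), hid]
  apply (padicValNat_dvd_iff_le hC).2
  omega

lemma keyD (k x : ℕ) (hk3 : 3 ≤ k) (hko : Odd k) (hx : 0 < x) (hdx : 3 ∣ x) :
    ((3:ℤ)^(padicValNat 3 k + 2 * padicValNat 3 x)) ∣
      2 * (S k x : ℤ) - (k : ℤ) * x * (S (k-1) x : ℤ) := by
  haveI : Fact (Nat.Prime 3) := ⟨by norm_num⟩
  set v := padicValNat 3 x with hv
  set V := padicValNat 3 k + 2 * v with hV
  have hv1 : 1 ≤ v := one_le_padicValNat_of_dvd hx.ne' hdx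
  set Q : ℕ → ℤ := fun e => ∑ i ∈ Finset.range (x+1), (i:ℤ)^e with hQ
  have hSQ : ∀ e, 0 < e → (S e x : ℤ) = Q e := by
    intro e he
    rw [S_range e x he]
    simp only [hQ]
    push_cast
    rfl
  have hrefl : Q k = ∑ i ∈ Finset.range (x+1), ((x:ℤ) - i)^k := by
    simp only [hQ]
    rw [← Finset.sum_range_reflect (fun j => ((j:ℕ):ℤ)^k) (x+1)]
    apply Finset.sum_congr rfl
    intro i hi
    simp only [Finset.mem_range] at hi
    rw [show x + 1 - 1 - i = x - i by omega, Nat.cast_sub (by omega)]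
  have two_p : 2 * Q k = ∑ i ∈ Finset.range (x+1), ((i:ℤ)^k + ((x:ℤ) - i)^k) := by
    rw [Finset.sum_add_distrib, ← hrefl]; simp only [hQ]; ring
  have point : ∀ i : ℕ, (i:ℤ)^k + ((x:ℤ) - i)^k
      = ∑ j ∈ Finset.range k, (x:ℤ)^(j+1) * (-(i:ℤ))^(k-(j+1)) * (Nat.choose k (j+1)) := by
    intro i
    have hexp : ((x:ℤ) - i)^k
        = ∑ j ∈ Finset.range (k+1), (x:ℤ)^j * (-(i:ℤ))^(k-j) * (Nat.choose k j) := by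
      rw [show (x:ℤ) - i = (x:ℤ) + (-(i:ℤ)) by ring, add_pow]
    rw [hexp, Finset.sum_range_succ']
    simp only [pow_zero, Nat.choose_zero_right, Nat.cast_one, one_mul, mul_one, Nat.sub_zero]
    rw [hko.neg_pow]
    ring
  have swap : 2 * Q k = ∑ j ∈ Finset.range k, ∑ i ∈ Finset.range (x+1),
      (x:ℤ)^(j+1) * (-(i:ℤ))^(k-(j+1)) * (Nat.choose k (j+1)) := by
    rw [two_p, Finset.sum_congr rfl (fun i _ => point i), Finset.sum_comm]
  have hek : Even (k-1) := Nat.Odd.sub_odd hko odd_one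
  have term0 : ∑ i ∈ Finset.range (x+1), (x:ℤ)^(0+1) * (-(i:ℤ))^(k-(0+1)) * (Nat.choose k (0+1))
      = (k:ℤ) * x * Q (k-1) := by
    rw [hQ, Finset.mul_sum]
    apply Finset.sum_congr rfl
    intro i _
    rw [hek.neg_pow, Nat.choose_one_right]
    push_cast
    ring
  -- peel off j = 0
  have peel : 2 * Q k = (∑ j ∈ Finset.range (k-1), ∑ i ∈ Finset.range (x+1),
      (x:ℤ)^(j+1+1) * (-(i:ℤ))^(k-(j+1+1)) * (Nat.choose k (j+1+1)))
      + (k:ℤ) * x * Q (k-1) := by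
    rw [swap, ← term0]
    rw [show k = (k-1) + 1 by omega]
    rw [Finset.sum_range_succ' _ (k-1)]
    congr 2 <;> rw [show k - 1 + 1 = k by omega]
  have divis : ∀ J : ℕ, 2 ≤ J → J ≤ k → ((3:ℤ)^V) ∣ (x:ℤ)^J * ((Nat.choose k J : ℕ):ℤ) := by
    intro J h2 hJk
    have hC : (3:ℕ)^(padicValNat 3 k - padicValNat 3 J) ∣ Nat.choose k J :=
      choose_val k J (by omega) hJk
    have hxp : (3:ℕ)^(J*v) ∣ x^J := by
      calc (3:ℕ)^(J*v) = (3^v)^J := by rw [← pow_mul, Nat.mul_comm]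
        _ ∣ x^J := pow_dvd_pow_of_dvd pow_padicValNat_dvd J
    have hmul : (3:ℕ)^(J*v + (padicValNat 3 k - padicValNat 3 J)) ∣ x^J * Nat.choose k J := by
      rw [pow_add]; exact mul_dvd_mul hxp hC
    have hle : V ≤ J*v + (padicValNat 3 k - padicValNat 3 J) := by
      have hJ3 : padicValNat 3 J ≤ J - 2 := val3_le J h2
      have hm : (J-2)*v + 2*v = J*v := by
        rw [← Nat.add_mul, show J - 2 + 2 = J by omega]
      have hb : padicValNat 3 J ≤ (J-2)*v :=
        le_trans hJ3 (Nat.le_mul_of_pos_right _ hv1)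
      omega
    have := (pow_dvd_pow 3 hle).trans hmul
    have hcast := Int.natCast_dvd_natCast.2 this
    push_cast at hcast
    exact_mod_cast hcast
  have main : ((3:ℤ)^V) ∣ 2 * Q k - (k:ℤ) * x * Q (k-1) := by
    rw [peel, add_sub_cancel_right]
    apply Finset.dvd_sum
    intro j hj
    simp only [Finset.mem_range] at hj
    apply Finset.dvd_sum
    intro i _
    have e : (x:ℤ)^(j+1+1) * (-(i:ℤ))^(k-(j+1+1)) * (Nat.choose k (j+1+1))
        = ((x:ℤ)^(j+2) * ((Nat.choose k (j+2) : ℕ):ℤ)) * (-(i:ℤ))^(k-(j+2)) := by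
      ring_nf
    rw [e]
    exact (divis (j+2) (by omega) (by omega)).mul_right _
  rw [hSQ k (by omega), hSQ (k-1) (by omega)]
  exact main

lemma caseD0 (x k : ℕ) (hx : 0 < x) (hdx : 3 ∣ x) (hk3 : 3 ≤ k) (hko : Odd k) :
    padicValNat 3 (S k x) = padicValNat 3 k + 2 * padicValNat 3 x - 1 := by
  haveI : Fact (Nat.Prime 3) := ⟨by norm_num⟩
  set v := padicValNat 3 x with hv
  set V := padicValNat 3 k + 2 * v with hV
  have hv1 : 1 ≤ v := one_le_padicValNat_of_dvd hx.ne' hdx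
  have hx3 : x % 3 = 0 := by omega
  have hke : Even (k-1) := Nat.Odd.sub_odd hko odd_one
  have hk10 : 0 < k - 1 := by omega
  have hSpos : 0 < S (k-1) x := S_pos _ x hx
  have hrhs : padicValNat 3 (x * (x+1) * (2*x+1)) = v := by
    rw [padicValNat.mul (by positivity) (by omega), padicValNat.mul hx.ne' (by omega),
      padicValNat.eq_zero_of_not_dvd (show ¬ 3 ∣ x+1 by omega),
      padicValNat.eq_zero_of_not_dvd (show ¬ 3 ∣ 2*x+1 by omega)]
    omega
  have hvS : padicValNat 3 (S (k-1) x) = v - 1 := by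
    rw [evenCase x (k-1) hx hk10 hke, hrhs]
  set A := k * x * S (k-1) x with hA
  have hA0 : A ≠ 0 := by positivity
  have hvA : padicValNat 3 A = V - 1 := by
    rw [hA, padicValNat.mul (by positivity) hSpos.ne', padicValNat.mul (by omega) hx.ne', hvS]
    omega
  set u := A / 3^(V-1) with hu
  have hAu : A = 3^(V-1) * u := by
    rw [hu, ← hvA]
    exact (Nat.ordProj_mul_ordCompl_eq_self A 3).symm
  have hu3 : ¬ 3 ∣ u := by
    rw [hu, ← hvA]
    exact Nat.not_dvd_ordCompl (by norm_num) hA0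
  have hcong : 2 * S k x ≡ A [MOD 3^V] := by
    rw [Nat.modEq_iff_dvd]
    have hkd := keyD k x hk3 hko hx hdx
    rw [← hV] at hkd
    have : ((A:ℕ):ℤ) - (2 * S k x : ℕ) = -(2 * (S k x : ℤ) - (k:ℤ) * x * (S (k-1) x : ℤ)) := by
      push_cast [hA]; ring
    rw [this]
    push_cast
    exact (dvd_neg.2 (by exact_mod_cast hkd))
  have hval2 : padicValNat 3 (2 * S k x) = V - 1 := by
    refine extract (u := u) (by have := S_pos k x hx; omega) hu3 ?_
    rw [show V - 1 + 1 = V by omega]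
    rw [hAu] at hcong
    exact hcong
  have hval : padicValNat 3 (S k x) = V - 1 := by
    rw [padicValNat.mul (by norm_num) (S_pos k x hx).ne',
      padicValNat.eq_zero_of_not_dvd (by norm_num)] at hval2
    omega
  omega

lemma rhsD (x k : ℕ) (hx : 0 < x) (hk : 0 < k) :
    padicValNat 3 (k * x^2 * (x+1)^2)
      = padicValNat 3 k + 2 * padicValNat 3 x + 2 * padicValNat 3 (x+1) := by
  haveI : Fact (Nat.Prime 3) := ⟨by norm_num⟩
  rw [padicValNat.mul (by positivity) (by positivity),
    padicValNat.mul hk.ne' (by positivity),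
    padicValNat.pow x 2, padicValNat.pow (x+1) 2]

lemma caseD (x k : ℕ) (hx : 0 < x) (h3 : x % 3 = 0 ∨ x % 3 = 2) (hk3 : 3 ≤ k) (hko : Odd k) :
    padicValNat 3 (S k x) = padicValNat 3 (k * x^2 * (x+1)^2) - 1 := by
  haveI : Fact (Nat.Prime 3) := ⟨by norm_num⟩
  rcases h3 with h3 | h3
  · have hdx : 3 ∣ x := by omega
    have h1 := caseD0 x k hx hdx hk3 hko
    have h2 := rhsD x k hx (by omega)
    rw [padicValNat.eq_zero_of_not_dvd (show ¬ 3 ∣ x+1 by omega)] at h2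
    omega
  · -- x ≡ 2 : work with x+1
    have hdx : 3 ∣ x+1 := by omega
    set v := padicValNat 3 (x+1) with hv
    set V := padicValNat 3 k + 2 * v with hV
    have hv1 : 1 ≤ v := one_le_padicValNat_of_dvd (by omega) hdx
    have h1 : padicValNat 3 (S k (x+1)) = V - 1 := caseD0 (x+1) k (by omega) hdx hk3 hko
    set B := S k (x+1) with hB
    have hB0 : B ≠ 0 := (S_pos k (x+1) (by omega)).ne'
    set u := B / 3^(V-1) with hu
    have hBu : B = 3^(V-1) * u := by
      rw [hu, ← h1]
      exact (Nat.ordProj_mul_ordCompl_eq_self B 3).symm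
    have hu3 : ¬ 3 ∣ u := by
      rw [hu, ← h1]
      exact Nat.not_dvd_ordCompl (by norm_num) hB0
    have hVk : V ≤ k * v := by
      have h4 : padicValNat 3 k ≤ k - 2 := val3_le k (by omega)
      have hm : (k-2)*v + 2*v = k*v := by
        rw [← Nat.add_mul, show k - 2 + 2 = k by omega]
      have hb : k - 2 ≤ (k-2)*v := Nat.le_mul_of_pos_right _ hv1
      omega
    have h0 : (x+1)^k ≡ 0 [MOD 3^V] := by
      apply Nat.modEq_zero_iff_dvd.2
      calc (3:ℕ)^V ∣ 3^(k*v) := pow_dvd_pow 3 hVk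
        _ = (3^v)^k := by rw [← pow_mul, Nat.mul_comm]
        _ ∣ (x+1)^k := pow_dvd_pow_of_dvd pow_padicValNat_dvd k
    have hcong : S k x ≡ 3^(V-1) * u [MOD 3^V] := by
      calc S k x = S k x + 0 := by ring
        _ ≡ S k x + (x+1)^k [MOD 3^V] := (Nat.ModEq.refl _).add h0.symm
        _ = S k (x+1) := (S_succ k x).symm
        _ = 3^(V-1) * u := hBu
    have hval : padicValNat 3 (S k x) = V - 1 := by
      refine extract (S_pos k x hx) hu3 ?_
      rwa [show V - 1 + 1 = V by omega]
    have h2 := rhsD x k hx (by omega)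
    rw [padicValNat.eq_zero_of_not_dvd (show ¬ 3 ∣ x by omega)] at h2
    omega

theorem stmt_14 (x k : ℕ) (hx : 0 < x) (hk : 0 < k) :
    (k = 1 → padicValNat 3 (S k x) = padicValNat 3 (x * (x + 1))) ∧
    (Even k → padicValNat 3 (S k x) = padicValNat 3 (x * (x + 1) * (2 * x + 1)) - 1) ∧
    (x % 3 = 1 → 3 ≤ k → Odd k → padicValNat 3 (S k x) = 0) ∧
    ((x % 3 = 0 ∨ x % 3 = 2) → 3 ≤ k → Odd k →
      padicValNat 3 (S k x) = padicValNat 3 (k * x ^ 2 * (x + 1) ^ 2) - 1) := by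
  refine ⟨?_, ?_, ?_, ?_⟩
  · rintro rfl
    exact caseA x hx
  · intro he
    exact evenCase x k hx hk he
  · intro h3 _ hko
    exact caseC x k hx h3 hko
  · intro h3 hk3 hko
    exact caseD x k hx h3 hk3 hko
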